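/- Define β(b) = b·½[−(1/b + 1) + √((1/b − 1)² + (8/3)(1/b))] for b > 0. Then β(b) < 0 for every b > 0, β is a decreasing function of b, and β(b) → −1/3 as b → ∞. -/
import Mathlib


open Filter

noncomputable def gAux (x : ℝ) : ℝ :=
  -2 / (3 * (Real.sqrt (x ^ 2 + 2 / 3 * x + 1) + x + 1))

lemma gAux_key (x : ℝ) (hx : 0 < x) :
    (1 / x) * ((-(x + 1) + Real.sqrt ((x - 1) ^ 2 + 8 / 3 * x)) / 2) = gAux x := by
  have hr : (x - 1) ^ 2 + 8 / 3 * x = x ^ 2 + 2 / 3 * x + 1 := by ring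
  rw [hr, gAux]
  have hnn : (0:ℝ) ≤ x ^ 2 + 2 / 3 * x + 1 := by nlinarith
  have hs2 : Real.sqrt (x ^ 2 + 2 / 3 * x + 1) ^ 2 = x ^ 2 + 2 / 3 * x + 1 :=
    Real.sq_sqrt hnn
  have hsnn : 0 ≤ Real.sqrt (x ^ 2 + 2 / 3 * x + 1) := Real.sqrt_nonneg _
  have hD : 0 < Real.sqrt (x ^ 2 + 2 / 3 * x + 1) + x + 1 := by linarith
  set s := Real.sqrt (x ^ 2 + 2 / 3 * x + 1)
  field_simp
  nlinarith [hs2]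

lemma gAux_neg (x : ℝ) (hx : 0 ≤ x) : gAux x < 0 := by
  have hsnn : 0 ≤ Real.sqrt (x ^ 2 + 2 / 3 * x + 1) := Real.sqrt_nonneg _
  have hD : 0 < 3 * (Real.sqrt (x ^ 2 + 2 / 3 * x + 1) + x + 1) := by linarith
  exact div_neg_of_neg_of_pos (by norm_num) hD

lemma gAux_mono {x y : ℝ} (hx : 0 ≤ x) (hxy : x < y) : gAux x < gAux y := by
  have hlt : x ^ 2 + 2 / 3 * x + 1 < y ^ 2 + 2 / 3 * y + 1 := by nlinarith
  have hs : Real.sqrt (x ^ 2 + 2 / 3 * x + 1) < Real.sqrt (y ^ 2 + 2 / 3 * y + 1) :=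
    Real.sqrt_lt_sqrt (by nlinarith) hlt
  have hsnn : 0 ≤ Real.sqrt (x ^ 2 + 2 / 3 * x + 1) := Real.sqrt_nonneg _
  have hDx : 0 < 3 * (Real.sqrt (x ^ 2 + 2 / 3 * x + 1) + x + 1) := by linarith
  have hDy : 0 < 3 * (Real.sqrt (y ^ 2 + 2 / 3 * y + 1) + y + 1) := by linarith
  rw [gAux, gAux, div_lt_div_iff₀ hDx hDy]
  nlinarith

/-- the self-similar exponent
`β(b) = b·½[−(1/b + 1) + √((1/b − 1)² + (8/3)(1/b))]` is negative for every
`b > 0`, is a decreasing function of `b`, and tends to `−1/3` as `b → ∞`. -/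
theorem stmt16 (β : ℝ → ℝ)
    (hβ : ∀ b : ℝ, 0 < b → β b =
      b * ((-(1 / b + 1) + Real.sqrt ((1 / b - 1) ^ 2 + 8 / 3 * (1 / b))) / 2)) :
    (∀ b : ℝ, 0 < b → β b < 0) ∧
    StrictAntiOn β (Set.Ioi 0) ∧
    Tendsto β atTop (nhds (-1 / 3)) := by
  have key : ∀ b : ℝ, 0 < b → β b = gAux (1 / b) := by
    intro b hb
    have hx : 0 < 1 / b := by positivity
    have := gAux_key (1 / b) hx
    rw [one_div_one_div] at this
    rw [hβ b hb, ← this]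
  refine ⟨fun b hb => by rw [key b hb]; exact gAux_neg _ (by positivity), ?_, ?_⟩
  · intro a ha b hb hab
    simp only [Set.mem_Ioi] at ha hb
    rw [key a ha, key b hb]
    exact gAux_mono (by positivity) (by
      apply one_div_lt_one_div_of_lt ha hab)
  · have h1 : Tendsto (fun b : ℝ => 1 / b) atTop (nhds 0) := by
      simpa [one_div] using tendsto_inv_atTop_zero
    have hc : ContinuousAt gAux 0 := by
      apply ContinuousAt.div continuousAt_const
      · fun_prop
      · simp [Real.sqrt_one]
    have hg0 : gAux 0 = -1 / 3 := by
      simp [gAux, Real.sqrt_one]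
      norm_num
    have h2 : Tendsto (fun b : ℝ => gAux (1 / b)) atTop (nhds (-1 / 3)) := by
      rw [← hg0]
      exact hc.tendsto.comp h1
    refine h2.congr' ?_
    filter_upwards [eventually_gt_atTop 0] with b hb
    exact (key b hb).symm
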